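/- Let U be a 3×3 unitary matrix. Then there exists a permutation of its columns such that, after the permutation, |U_{33}| ≥ 1/√3 and |U_{22}U_{33} − U_{23}U_{32}| ≥ 1/√6. -/

import Mathlib

open Matrix

lemma perm_exists : ∀ j k : Fin 3, j ≠ k → ∃ σ : Equiv.Perm (Fin 3), σ 2 = j ∧ σ 0 = k := by decide

lemma minor_eq (V : Matrix (Fin 3) (Fin 3) ℂ) (hV : Vᴴ * V = 1) :
    ‖V 1 1 * V 2 2 - V 1 2 * V 2 1‖ = ‖V 0 0‖ := by
  have hadj : adjugate V = V.det • Vᴴ := by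
    calc adjugate V = (Vᴴ * V) * adjugate V := by rw [hV, one_mul]
    _ = Vᴴ * (V.det • 1) := by rw [Matrix.mul_assoc, Matrix.mul_adjugate]
    _ = V.det • Vᴴ := by rw [Matrix.mul_smul, Matrix.mul_one]
  have h00 : V 1 1 * V 2 2 - V 1 2 * V 2 1 = V.det * star (V 0 0) := by
    have := congrArg (fun M => M 0 0) hadj
    simpa [adjugate_fin_three, conjTranspose_apply] using this
  have hdet : ‖V.det‖ = 1 := by
    have h1 : star V.det * V.det = 1 := by
      rw [← det_conjTranspose, ← det_mul, hV, det_one]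
    have := congrArg (‖·‖) h1
    rw [norm_mul, norm_one,
      show ‖star V.det‖ = ‖V.det‖ from norm_star V.det] at this
    nlinarith [norm_nonneg V.det]
  rw [h00, norm_mul, hdet, one_mul, show ‖star (V 0 0)‖ = ‖V 0 0‖ from norm_star _]

/-- Ordering lemma for unitary matrices: the columns of a `3 × 3` unitary matrix can be
permuted so that `|U 3 3| ≥ 1/√3` and `|U 2 2 * U 3 3 - U 2 3 * U 3 2| ≥ 1/√6`. -/
theorem unitary_ordering_lemma (U : Matrix (Fin 3) (Fin 3) ℂ) (hU : Uᴴ * U = 1) :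
    ∃ σ : Equiv.Perm (Fin 3),
      (1 / Real.sqrt 3 ≤ ‖(U.submatrix id σ) 2 2‖) ∧
      (1 / Real.sqrt 6 ≤ ‖
        ((U.submatrix id σ) 1 1 * (U.submatrix id σ) 2 2 -
         (U.submatrix id σ) 1 2 * (U.submatrix id σ) 2 1)‖) := by
  have hU' : U * Uᴴ = 1 := mul_eq_one_comm.mp hU
  have rowsum : ∀ i : Fin 3, ‖U i 0‖ ^ 2 + ‖U i 1‖ ^ 2 + ‖U i 2‖ ^ 2 = 1 := by
    intro i
    have := congrArg (fun M => M i i) hU'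
    simp only [Matrix.mul_apply, Fin.sum_univ_three, conjTranspose_apply, Matrix.one_apply_eq] at this
    have h2 : (U i 0 * star (U i 0) + U i 1 * star (U i 1) + U i 2 * star (U i 2) : ℂ) = 1 := this
    have := congrArg Complex.re h2
    simpa [Complex.mul_conj', Complex.sq_norm, ← Complex.ofReal_pow] using this
  have colsum : ∀ j : Fin 3, ‖U 0 j‖ ^ 2 + ‖U 1 j‖ ^ 2 + ‖U 2 j‖ ^ 2 = 1 := by
    intro j
    have := congrArg (fun M => M j j) hU
    simp only [Matrix.mul_apply, Fin.sum_univ_three, conjTranspose_apply, Matrix.one_apply_eq] at this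
    have h2 : (star (U 0 j) * U 0 j + star (U 1 j) * U 1 j + star (U 2 j) * U 2 j : ℂ) = 1 := this
    have := congrArg Complex.re h2
    simpa [Complex.mul_conj, Complex.sq_norm, ← Complex.ofReal_pow, Complex.normSq_apply] using this
  have key : ∃ j k : Fin 3, j ≠ k ∧ (1:ℝ)/3 ≤ ‖U 2 j‖ ^ 2 ∧ (1:ℝ)/6 ≤ ‖U 0 k‖ ^ 2 := by
    have ha2 := rowsum 2
    have hb2 := rowsum 0
    have hnn : ∀ (i j : Fin 3), 0 ≤ ‖U i j‖ ^ 2 := fun i j => sq_nonneg _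
    have hcol : ∀ j : Fin 3, ‖U 2 j‖ ^ 2 + ‖U 0 j‖ ^ 2 ≤ 1 := by
      intro j; linarith [colsum j, hnn 1 j]
    have hj : ∃ j : Fin 3, (1:ℝ)/3 ≤ ‖U 2 j‖ ^ 2 := by
      by_contra h
      push_neg at h
      linarith [h 0, h 1, h 2]
    obtain ⟨j, hja⟩ := hj
    fin_cases j
    · have hja' : (1:ℝ)/3 ≤ ‖U 2 0‖ ^ 2 := hja
      by_cases h1 : (1:ℝ)/6 ≤ ‖U 0 1‖ ^ 2
      · exact ⟨0, 1, by decide, hja', h1⟩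
      · by_cases h2 : (1:ℝ)/6 ≤ ‖U 0 2‖ ^ 2
        · exact ⟨0, 2, by decide, hja', h2⟩
        · exact absurd (hcol 0) (by push_neg at h1 h2 ⊢; linarith)
    · have hja' : (1:ℝ)/3 ≤ ‖U 2 1‖ ^ 2 := hja
      by_cases h1 : (1:ℝ)/6 ≤ ‖U 0 0‖ ^ 2
      · exact ⟨1, 0, by decide, hja', h1⟩
      · by_cases h2 : (1:ℝ)/6 ≤ ‖U 0 2‖ ^ 2
        · exact ⟨1, 2, by decide, hja', h2⟩
        · exact absurd (hcol 1) (by push_neg at h1 h2 ⊢; linarith)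
    · have hja' : (1:ℝ)/3 ≤ ‖U 2 2‖ ^ 2 := hja
      by_cases h1 : (1:ℝ)/6 ≤ ‖U 0 0‖ ^ 2
      · exact ⟨2, 0, by decide, hja', h1⟩
      · by_cases h2 : (1:ℝ)/6 ≤ ‖U 0 1‖ ^ 2
        · exact ⟨2, 1, by decide, hja', h2⟩
        · exact absurd (hcol 2) (by push_neg at h1 h2 ⊢; linarith)
  obtain ⟨j, k, hjk, hja, hkb⟩ := key
  obtain ⟨σ, hσ2, hσ0⟩ := perm_exists j k hjk
  have habs : ∀ (c : ℝ) (z : ℂ), 0 < c → c^2 ≤ ‖z‖ ^ 2 → c ≤ ‖z‖ := by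
    intro c z hc h
    nlinarith [norm_nonneg z]
  have hV : (U.submatrix id σ)ᴴ * (U.submatrix id σ) = 1 := by
    rw [conjTranspose_submatrix]
    rw [show ((id : Fin 3 → Fin 3)) = ⇑(Equiv.refl (Fin 3)) from rfl, submatrix_mul_equiv,
      hU, submatrix_one_equiv]
  refine ⟨σ, ?_, ?_⟩
  · have e1 : (U.submatrix id σ) 2 2 = U 2 j := by simp [submatrix_apply, hσ2]
    rw [e1]
    apply habs
    · positivity
    · rw [div_pow, one_pow, Real.sq_sqrt (by norm_num : (0:ℝ) ≤ 3)]
      exact hja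
  · rw [minor_eq _ hV]
    have e0 : (U.submatrix id σ) 0 0 = U 0 k := by simp [submatrix_apply, hσ0]
    rw [e0]
    apply habs
    · positivity
    · rw [div_pow, one_pow, Real.sq_sqrt (by norm_num : (0:ℝ) ≤ 6)]
      exact hkb
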